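/- Define h(x,y) = (1/(x+y+1))·[x + x(x+1)/(2(x+y))] − ψ(x+y+1) + ψ(y+1). For fixed y > 0, the function x ↦ h(x,y) is strictly decreasing on [1/√2, ∞). -/

import Mathlib

noncomputable def psi (z : ℝ) : ℝ := deriv (fun t => Real.log (Real.Gamma t)) z

noncomputable def h (x y : ℝ) : ℝ :=
  (1 / (x + y + 1)) * (x + x * (x + 1) / (2 * (x + y))) - psi (x + y + 1) + psi (y + 1)

open Filter Topology Real Set Finset

noncomputable def Efn (c : ℝ) : ℝ := (c⁻¹ + (c+1)⁻¹)/2 - (Real.log (c+1) - Real.log c)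

lemma Efn_hasDeriv {c : ℝ} (hc : 0 < c) :
    HasDerivAt Efn ((-1/c^2 + -1/(c+1)^2)/2 - (1/(c+1) - 1/c)) c := by
  have h1 : HasDerivAt (fun x : ℝ => x) 1 c := hasDerivAt_id c
  have h2 : HasDerivAt (fun x : ℝ => x + 1) 1 c := h1.add_const 1
  have hc1 : (0:ℝ) < c + 1 := by linarith
  have d1 : HasDerivAt (fun x : ℝ => x⁻¹) (-1/c^2) c := by
    simpa [neg_div] using hasDerivAt_inv hc.ne'
  have d2 : HasDerivAt (fun x : ℝ => (x+1)⁻¹) (-1/(c+1)^2) c := by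
    simpa [neg_div, Function.comp_def] using (hasDerivAt_inv hc1.ne').comp c h2
  have d3 : HasDerivAt (fun x : ℝ => Real.log (x+1)) (1/(c+1)) c := by
    simpa using h2.log hc1.ne'
  have d4 : HasDerivAt Real.log (1/c) c := by
    simpa [one_div] using Real.hasDerivAt_log hc.ne'
  exact ((d1.add d2).div_const 2).sub (d3.sub d4)

lemma Efn_anti : AntitoneOn Efn (Set.Ioi 0) := by
  apply antitoneOn_of_deriv_nonpos (convex_Ioi 0)
  · intro c hc
    exact (Efn_hasDeriv (mem_Ioi.mp hc)).continuousAt.continuousWithinAt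
  · intro c hc
    rw [interior_Ioi] at hc
    exact (Efn_hasDeriv (mem_Ioi.mp hc)).differentiableAt.differentiableWithinAt
  · intro c hc
    rw [interior_Ioi] at hc
    have hc' : (0:ℝ) < c := mem_Ioi.mp hc
    have hc1 : (0:ℝ) < c + 1 := by linarith
    rw [(Efn_hasDeriv hc').deriv]
    have key : (-1/c^2 + -1/(c+1)^2)/2 - (1/(c+1) - 1/c) = -((1/c - 1/(c+1))^2)/2 := by
      field_simp
      ring
    rw [key]
    exact div_nonpos_of_nonpos_of_nonneg (neg_nonpos.mpr (sq_nonneg _)) (by norm_num)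
set_option maxHeartbeats 1000000

lemma summable_base : Summable (fun k : ℕ => (1:ℝ)/(k+1)^2) := by
  have := (summable_nat_add_iff (f := fun n : ℕ => (1:ℝ)/(n:ℝ)^2) 1).2
    (Real.summable_one_div_nat_pow.2 one_lt_two)
  simpa using this

lemma summable_u {z : ℝ} (hz : 0 < z) :
    Summable (fun k : ℕ => 1/((k:ℝ)+1) - 1/(z+k+1)) := by
  refine Summable.of_nonneg_of_le (fun k => ?_) (fun k => ?_) (summable_base.mul_left z)
  · have h1 : (0:ℝ) < (k:ℝ)+1 := by positivity
    have h2 : (0:ℝ) < z+k+1 := by positivity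
    rw [sub_nonneg, div_le_div_iff₀ h2 h1]
    linarith
  · have h1 : (0:ℝ) < (k:ℝ)+1 := by positivity
    have h2 : (0:ℝ) < z+k+1 := by positivity
    have e : 1/((k:ℝ)+1) - 1/(z+k+1) = z/(((k:ℝ)+1)*(z+k+1)) := by
      field_simp
      ring
    rw [e, mul_one_div]
    apply div_le_div_of_nonneg_left hz.le (by positivity)
    nlinarith

noncomputable def Sfn (z : ℝ) : ℝ :=
  -Real.eulerMascheroniConstant - 1/z + ∑' k : ℕ, (1/((k:ℝ)+1) - 1/(z+k+1))

lemma fprime_eq (n : ℕ) (t : ℝ) (ht : 0 < t) :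
    Real.log n - ∑ k ∈ Finset.range (n+1), (t + (k:ℝ))⁻¹
      = Real.log n - (harmonic n : ℝ) - 1/t
        + ∑ k ∈ Finset.range n, (1/((k:ℝ)+1) - 1/(t+k+1)) := by
  have h1 : ∑ k ∈ Finset.range (n+1), (t + (k:ℝ))⁻¹
      = (∑ k ∈ Finset.range n, (t + ((k:ℝ)+1))⁻¹) + t⁻¹ := by
    rw [Finset.sum_range_succ' (fun k => (t + (k:ℝ))⁻¹) n]
    push_cast
    norm_num
  have h2 : (harmonic n : ℝ) = ∑ k ∈ Finset.range n, 1/((k:ℝ)+1) := by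
    rw [harmonic]
    push_cast
    simp [one_div]
  rw [h1, h2, Finset.sum_sub_distrib]
  have h3 : ∑ k ∈ Finset.range n, (t + ((k:ℝ)+1))⁻¹
      = ∑ k ∈ Finset.range n, 1/(t+(k:ℝ)+1) := by
    refine Finset.sum_congr rfl fun k _ => ?_
    rw [one_div]
    ring_nf
  rw [h3, one_div]
  ring


lemma hasDerivAt_log_Gamma {z : ℝ} (hz : 0 < z) :
    HasDerivAt (fun t => Real.log (Real.Gamma t)) (Sfn z) z := by
  set f : ℕ → ℝ → ℝ := fun n t => t * Real.log n + Real.log (n.factorial : ℝ) -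
      ∑ k ∈ Finset.range (n+1), Real.log (t + (k:ℝ)) with hf
  set f' : ℕ → ℝ → ℝ := fun n t => Real.log n - ∑ k ∈ Finset.range (n+1), (t + (k:ℝ))⁻¹ with hf'
  have hderiv : ∀ n : ℕ, ∀ t ∈ Set.Ioi (0:ℝ), HasDerivAt (f n) (f' n t) t := by
    intro n t ht
    have ht' : (0:ℝ) < t := ht
    have d1 : HasDerivAt (fun t : ℝ => t * Real.log n + Real.log (n.factorial : ℝ)) (Real.log n) t :=
      (hasDerivAt_mul_const (Real.log n)).add_const _
    have d2 : HasDerivAt (fun t : ℝ => ∑ k ∈ Finset.range (n+1), Real.log (t + (k:ℝ)))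
        (∑ k ∈ Finset.range (n+1), (t + (k:ℝ))⁻¹) t := by
      refine HasDerivAt.fun_sum fun k _ => ?_
      have hk : (0:ℝ) < t + k := by positivity
      simpa [one_div] using ((hasDerivAt_id t).add_const (k:ℝ)).log hk.ne'
    exact d1.sub d2
  have hpt : ∀ t ∈ Set.Ioi (0:ℝ), Tendsto (fun n => f n t) atTop (𝓝 (Real.log (Real.Gamma t))) := by
    intro t ht
    have ht' : (0:ℝ) < t := ht
    have h0 : Tendsto (fun n => Real.log (Real.GammaSeq t n)) atTop
        (𝓝 (Real.log (Real.Gamma t))) :=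
      ((Real.continuousAt_log (Real.Gamma_pos_of_pos ht').ne').tendsto).comp
        (Real.GammaSeq_tendsto_Gamma t)
    refine h0.congr' ?_
    filter_upwards [eventually_ge_atTop 1] with n hn
    have hnp : (0:ℝ) < (n:ℝ) := by exact_mod_cast hn
    have hfac : (0:ℝ) < (n.factorial : ℝ) := by exact_mod_cast n.factorial_pos
    have hprod : (0:ℝ) < ∏ j ∈ Finset.range (n+1), (t + (j:ℝ)) :=
      Finset.prod_pos fun j _ => by positivity
    rw [Real.GammaSeq, Real.log_div (by positivity) hprod.ne',
      Real.log_mul (by positivity) hfac.ne', Real.log_rpow hnp,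
      Real.log_prod (fun j _ => by positivity)]
  have hunif : TendstoLocallyUniformlyOn f' Sfn atTop (Set.Ioi 0) := by
    rw [tendstoLocallyUniformlyOn_iff_forall_isCompact isOpen_Ioi]
    intro K hKs hK
    obtain ⟨M0, hM0⟩ := hK.bddAbove
    set M : ℝ := max M0 0 with hM
    have hKM : ∀ t ∈ K, t ≤ M := fun t ht => le_max_of_le_left (hM0 ht)
    have hA : TendstoUniformlyOn
        (fun (n : ℕ) (_ : ℝ) => Real.log n - (harmonic n : ℝ))
        (fun _ => -Real.eulerMascheroniConstant) atTop K := by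
      have : Tendsto (fun n : ℕ => Real.log n - (harmonic n : ℝ)) atTop
          (𝓝 (-Real.eulerMascheroniConstant)) := by
        simpa using Real.tendsto_harmonic_sub_log.neg
      exact this.tendstoUniformlyOn_const K
    have hB : TendstoUniformlyOn (fun (_ : ℕ) (t : ℝ) => 1/t) (fun t => 1/t) atTop K := by
      refine Metric.tendstoUniformlyOn_iff.2 fun ε hε => Eventually.of_forall fun n t _ => ?_
      simpa using hε
    have hC : TendstoUniformlyOn
        (fun (n : ℕ) (t : ℝ) => ∑ k ∈ Finset.range n, (1/((k:ℝ)+1) - 1/(t+k+1)))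
        (fun t => ∑' k : ℕ, (1/((k:ℝ)+1) - 1/(t+k+1))) atTop K := by
      refine tendstoUniformlyOn_tsum_nat (summable_base.mul_left M) fun k t ht => ?_
      have ht' : (0:ℝ) < t := hKs ht
      have htM : t ≤ M := hKM t ht
      have h1 : (0:ℝ) < (k:ℝ)+1 := by positivity
      have h2 : (0:ℝ) < t+k+1 := by positivity
      have e : 1/((k:ℝ)+1) - 1/(t+k+1) = t/(((k:ℝ)+1)*(t+k+1)) := by field_simp; ring
      rw [Real.norm_eq_abs, e, abs_of_nonneg (by positivity)]
      calc t/(((k:ℝ)+1)*(t+k+1)) ≤ t/(((k:ℝ)+1)*((k:ℝ)+1)) := by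
            apply div_le_div_of_nonneg_left ht'.le (by positivity)
            nlinarith
        _ = t * (1/((k:ℝ)+1)^2) := by rw [pow_two, mul_one_div]
        _ ≤ M * (1/((k:ℝ)+1)^2) := by gcongr
    have hcomb := (hA.sub hB).add hC
    refine (hcomb.congr ?_).congr_right ?_
    · filter_upwards with n
      intro t ht
      simp only [Pi.add_apply, Pi.sub_apply]
      exact (fprime_eq n t (hKs ht)).symm
    · intro t _
      simp only [Pi.add_apply, Pi.sub_apply, Sfn]
  exact hasDerivAt_of_tendstoLocallyUniformlyOn isOpen_Ioi hunif
    (Eventually.of_forall hderiv) hpt hz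

lemma psi_eq_Sfn {z : ℝ} (hz : 0 < z) : psi z = Sfn z :=
  (hasDerivAt_log_Gamma hz).deriv

lemma psi_diff_ge {a b : ℝ} (ha : 0 < a) (hab : a < b) :
    Real.log b - Real.log a + (1/a - 1/b)/2 ≤ psi b - psi a := by
  have hb : 0 < b := ha.trans hab
  rw [psi_eq_Sfn ha, psi_eq_Sfn hb]
  set t : ℕ → ℝ := fun j => 1/(a+j) - 1/(b+j) with hT
  set L : ℕ → ℝ := fun j => Real.log (j+a) - Real.log (j+b) with hL
  have hpos : ∀ (c : ℝ), 0 < c → ∀ j : ℕ, (0:ℝ) < c + j := fun c hc j => by positivity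
  -- summability of shifted difference
  have hsum : Summable (fun k : ℕ => (1/((k:ℝ)+1) - 1/(b+k+1)) - (1/((k:ℝ)+1) - 1/(a+k+1))) :=
    (summable_u hb).sub (summable_u ha)
  have hsum' : Summable (fun k : ℕ => t (k+1)) := by
    refine hsum.congr fun k => ?_
    simp only [hT]
    push_cast
    ring
  -- tsum difference identity
  have htsum : (∑' k : ℕ, (1/((k:ℝ)+1) - 1/(b+k+1))) - (∑' k : ℕ, (1/((k:ℝ)+1) - 1/(a+k+1)))
      = ∑' k : ℕ, t (k+1) := by
    rw [← (summable_u hb).tsum_sub (summable_u ha)]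
    refine tsum_congr fun k => ?_
    simp only [hT]
    push_cast
    ring
  -- partial sum lower bound
  have step1 : ∀ n : ℕ, ∑ k ∈ Finset.range n, t (k+1)
      = (∑ k ∈ Finset.range n, (t k + t (k+1))/2) + (t n - t 0)/2 := by
    intro n
    induction n with
    | zero => simp
    | succ n ih => rw [Finset.sum_range_succ, Finset.sum_range_succ, ih]; ring
  have step2 : ∀ k : ℕ, L (k+1) - L k ≤ (t k + t (k+1))/2 := by
    intro k
    have h1 : (0:ℝ) < (k:ℝ) + a := by positivity
    have h2 : (0:ℝ) < (k:ℝ) + b := by positivity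
    have hE := Efn_anti (Set.mem_Ioi.mpr h1) (Set.mem_Ioi.mpr h2) (by linarith)
    simp only [Efn] at hE
    simp only [hT, hL]
    push_cast
    have e1 : ((k:ℝ)+1) + a = ((k:ℝ)+a) + 1 := by ring
    have e2 : ((k:ℝ)+1) + b = ((k:ℝ)+b) + 1 := by ring
    rw [e1, e2]
    have i1 : 1/(a+(k:ℝ)) = ((k:ℝ)+a)⁻¹ := by rw [one_div]; ring_nf
    have i2 : 1/(b+(k:ℝ)) = ((k:ℝ)+b)⁻¹ := by rw [one_div]; ring_nf
    have i3 : 1/(a+((k:ℝ)+1)) = (((k:ℝ)+a)+1)⁻¹ := by rw [one_div]; ring_nf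
    have i4 : 1/(b+((k:ℝ)+1)) = (((k:ℝ)+b)+1)⁻¹ := by rw [one_div]; ring_nf
    rw [i1, i2, i3, i4]
    linarith
  have step3 : ∀ n : ℕ, ∑ k ∈ Finset.range n, (L (k+1) - L k) = L n - L 0 :=
    fun n => Finset.sum_range_sub L n
  have hPA : ∀ n : ℕ, L n - L 0 + (t n - t 0)/2 ≤ ∑ k ∈ Finset.range n, t (k+1) := by
    intro n
    rw [step1 n, ← step3 n]
    have : ∑ k ∈ Finset.range n, (L (k+1) - L k) ≤ ∑ k ∈ Finset.range n, (t k + t (k+1))/2 :=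
      Finset.sum_le_sum fun k _ => step2 k
    linarith
  -- limits
  have hden : ∀ c : ℝ, 0 < c → Tendsto (fun n : ℕ => ((n:ℝ)+c)⁻¹) atTop (𝓝 0) := by
    intro c hc
    exact (tendsto_atTop_add_const_right atTop c tendsto_natCast_atTop_atTop).inv_tendsto_atTop
  have htL : Tendsto L atTop (𝓝 0) := by
    have h1 : Tendsto (fun n : ℕ => ((n:ℝ)+a)/((n:ℝ)+b)) atTop (𝓝 1) := by
      have h2 : Tendsto (fun n : ℕ => 1 + (a-b)*((n:ℝ)+b)⁻¹) atTop (𝓝 1) := by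
        have := ((hden b hb).const_mul (a-b)).const_add 1
        simpa using this
      refine h2.congr fun n => ?_
      have hnb : (0:ℝ) < (n:ℝ)+b := by positivity
      field_simp
      ring
    have h0 := ((Real.continuousAt_log one_ne_zero).tendsto).comp h1
    rw [Real.log_one] at h0
    refine h0.congr fun n => ?_
    have hna : (0:ℝ) < (n:ℝ)+a := by positivity
    have hnb : (0:ℝ) < (n:ℝ)+b := by positivity
    simp only [Function.comp_apply, hL]
    rw [Real.log_div hna.ne' hnb.ne']
  have htt : Tendsto t atTop (𝓝 0) := by
    have h1 : Tendsto (fun n : ℕ => ((n:ℝ)+a)⁻¹ - ((n:ℝ)+b)⁻¹) atTop (𝓝 0) := by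
      simpa using (hden a ha).sub (hden b hb)
    refine h1.congr fun n => ?_
    simp only [hT, one_div]
    ring_nf
  -- combine
  have hA : Tendsto (fun n : ℕ => L n - L 0 + (t n - t 0)/2) atTop
      (𝓝 (0 - L 0 + (0 - t 0)/2)) :=
    (htL.sub_const (L 0)).add ((htt.sub_const (t 0)).div_const 2)
  have hP : Tendsto (fun n : ℕ => ∑ k ∈ Finset.range n, t (k+1)) atTop
      (𝓝 (∑' k : ℕ, t (k+1))) := hsum'.hasSum.tendsto_sum_nat
  have hfinal : 0 - L 0 + (0 - t 0)/2 ≤ ∑' k : ℕ, t (k+1) :=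
    le_of_tendsto_of_tendsto' hA hP hPA
  have hL0 : L 0 = Real.log a - Real.log b := by simp [hL]
  have ht0 : t 0 = 1/a - 1/b := by simp [hT]
  rw [hL0, ht0] at hfinal
  simp only [Sfn]
  have := htsum
  linarith [hfinal, htsum.ge, htsum.le]

lemma G_aux (y : ℝ) (hy : 0 < y) {x : ℝ} (hx : 0 < x) :
    HasDerivAt (fun x => (1 / (x + y + 1)) * (x + x * (x + 1) / (2 * (x + y)))
        - Real.log (x + y + 1) + (x + y + 1)⁻¹/2)
      (-(4*x^3 + 2*x^2 + 4*x^2*y - 2*y) / (4*(x+y)^2*(x+y+1)^2)) x := by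
  have hs : 0 < x + y := by linarith
  have hz : 0 < x + y + 1 := by linarith
  have d_lin : HasDerivAt (fun x : ℝ => x + y + 1) 1 x :=
    ((hasDerivAt_id x).add_const y).add_const 1
  have d_lin2 : HasDerivAt (fun x : ℝ => 2*(x+y)) 2 x := by
    simpa using ((hasDerivAt_id x).add_const y).const_mul 2
  have d_inv : HasDerivAt (fun x : ℝ => 1/(x+y+1)) (-1/(x+y+1)^2) x := by
    simpa [one_div, neg_div, Function.comp_def] using (hasDerivAt_inv hz.ne').comp x d_lin
  have d_num : HasDerivAt (fun x : ℝ => x*(x+1)) (1*(x+1)+x*1) x :=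
    (hasDerivAt_id x).mul ((hasDerivAt_id x).add_const 1)
  have d_frac : HasDerivAt (fun x : ℝ => x*(x+1)/(2*(x+y)))
      (((1*(x+1)+x*1)*(2*(x+y)) - x*(x+1)*2)/(2*(x+y))^2) x :=
    d_num.div d_lin2 (by positivity)
  have d_fst : HasDerivAt (fun x : ℝ => x + x*(x+1)/(2*(x+y)))
      (1 + (((1*(x+1)+x*1)*(2*(x+y)) - x*(x+1)*2)/(2*(x+y))^2)) x :=
    (hasDerivAt_id x).add d_frac
  have d_mul := d_inv.mul d_fst
  have d_log : HasDerivAt (fun x : ℝ => Real.log (x+y+1)) (1/(x+y+1)) x := by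
    simpa using d_lin.log hz.ne'
  have d_inv2 : HasDerivAt (fun x : ℝ => (x+y+1)⁻¹/2) ((-1/(x+y+1)^2)/2) x := by
    have := (hasDerivAt_inv hz.ne').comp x d_lin
    simpa [neg_div, Function.comp_def] using this.div_const 2
  have dd := (d_mul.sub d_log).add d_inv2
  refine HasDerivAt.congr_deriv dd ?_
  field_simp
  ring

lemma G_strictAnti (y : ℝ) (hy : 0 < y) :
    StrictAntiOn (fun x => (1 / (x + y + 1)) * (x + x * (x + 1) / (2 * (x + y)))
        - Real.log (x + y + 1) + (x + y + 1)⁻¹/2) (Set.Ici (1/Real.sqrt 2)) := by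
  have hc : 0 < 1/Real.sqrt 2 := by positivity
  apply strictAntiOn_of_deriv_neg (convex_Ici _)
  · intro x hx
    exact (G_aux y hy (lt_of_lt_of_le hc hx)).continuousAt.continuousWithinAt
  · intro x hx
    rw [interior_Ici] at hx
    have hx' : 1/Real.sqrt 2 < x := hx
    have hx0 : 0 < x := hc.trans hx'
    rw [(G_aux y hy hx0).deriv]
    have hx2 : 1/2 ≤ x^2 := by
      have h2 : (1/Real.sqrt 2)^2 = 1/2 := by
        rw [div_pow, one_pow, Real.sq_sqrt (by norm_num : (0:ℝ) ≤ 2)]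
      calc (1:ℝ)/2 = (1/Real.sqrt 2)^2 := h2.symm
        _ ≤ x^2 := by nlinarith [hc.le, hx'.le]
    apply div_neg_of_neg_of_pos
    · nlinarith [mul_nonneg hy.le (by linarith : (0:ℝ) ≤ x^2 - 1/2), pow_pos hx0 3,
        mul_pos hx0 hx0]
    · positivity

theorem stmt_5 (y : ℝ) (hy : 0 < y) :
    StrictAntiOn (fun x => h x y) (Set.Ici (1 / Real.sqrt 2)) := by
  intro p hp q hq hpq
  have hc : 0 < 1/Real.sqrt 2 := by positivity
  have hp0 : 0 < p := lt_of_lt_of_le hc hp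
  have hq0 : 0 < q := lt_of_lt_of_le hc hq
  have hzp : 0 < p + y + 1 := by linarith
  have hzq : 0 < q + y + 1 := by linarith
  have hG := G_strictAnti y hy hp hq hpq
  have hpsi := psi_diff_ge hzp (by linarith : p + y + 1 < q + y + 1)
  simp only [h]
  simp only [one_div] at hG hpsi ⊢
  linarith [hG, hpsi]
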